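/- Let (A, Σ) be a signed system in which the i-th column of Σ contains only '+' entries and every row contains exactly one '−' entry. Then for every z ∈ (ℝ∪{∞})^d there exists ξ ∈ ℝ such that the point obtained from z by replacing its i-th coordinate with ξ is feasible for (A, Σ). -/

import Mathlib

/-- Let `(A, Σ)` be a signed system with finite coefficients in which every entry
of `Σ` is `+` or `−`, the `i`-th column of `Σ` contains only `+` entries and every
row contains exactly one `−` entry.  Then for every `z ∈ (ℝ ∪ {∞})^d` there is a
`ξ ∈ ℝ` such that replacing the `i`-th coordinate of `z` by `ξ` yields a feasible
point for `(A, Σ)`. -/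
theorem stmt_9 (n d : ℕ) (A : Fin n → Fin d → ℝ)
    (σ : Fin n → Fin d → SignType)
    (hpm : ∀ j i, σ j i = 1 ∨ σ j i = -1)
    (i : Fin d) (hcol : ∀ j, σ j i = 1)
    (hrow : ∀ j, ∃! l, σ j l = -1) :
    ∀ z : Fin d → WithTop ℝ, ∃ ξ : ℝ,
      ∀ j : Fin n,
        ((Finset.univ.filter fun l => σ j l = 1).inf fun l =>
            ((A j l : ℝ) : WithTop ℝ) + Function.update z i ((ξ : ℝ) : WithTop ℝ) l) ≤
        ((Finset.univ.filter fun l => σ j l = -1).inf fun l =>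
            ((A j l : ℝ) : WithTop ℝ) + Function.update z i ((ξ : ℝ) : WithTop ℝ) l) := by
  classical
  intro z
  choose l hl hul using hrow
  set g : Fin n → ℝ := fun j => WithTop.untopD 0 (z (l j)) + A j (l j) - A j i with hg
  rcases isEmpty_or_nonempty (Fin n) with hn | hn
  · exact ⟨0, fun j => hn.elim j⟩
  refine ⟨Finset.univ.inf' Finset.univ_nonempty g, fun j => ?_⟩
  have hne : l j ≠ i := by
    intro h
    have := hl j
    rw [h, hcol j] at this
    exact absurd this (by decide)
  have hfilt : (Finset.univ.filter fun k => σ j k = -1) = {l j} := by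
    ext k
    simp only [Finset.mem_filter, Finset.mem_univ, true_and, Finset.mem_singleton]
    exact ⟨fun h => hul j k h, fun h => h ▸ hl j⟩
  set ξ : ℝ := Finset.univ.inf' Finset.univ_nonempty g with hξ
  rw [hfilt, Finset.inf_singleton, Function.update_of_ne hne]
  have hmem : i ∈ Finset.univ.filter fun k => σ j k = 1 := by
    simp [hcol j]
  refine le_trans (Finset.inf_le hmem) ?_
  rw [Function.update_self]
  cases hz : z (l j) with
  | top => simp
  | coe x =>
    have hξle : ξ ≤ g j := Finset.inf'_le g (Finset.mem_univ j)
    have hgj : g j = x + A j (l j) - A j i := by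
      simp [hg, hz]
    have : A j i + ξ ≤ A j (l j) + x := by
      rw [hgj] at hξle; linarith
    calc ((A j i : ℝ) : WithTop ℝ) + (ξ : ℝ) = ((A j i + ξ : ℝ) : WithTop ℝ) := by
          norm_cast
      _ ≤ ((A j (l j) + x : ℝ) : WithTop ℝ) := by exact_mod_cast this
      _ = (A j (l j) : WithTop ℝ) + (x : ℝ) := by norm_cast
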